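/- arXiv:2605.19267 — 3 statements merged into one kernel-verified Lean document; each statement's English description precedes it below -/
import Mathlib

section
/- Fix W > 0, T > 0, N ∈ (0, 1), F_max ≥ 0, σ ≥ 0, r_c ≥ 0 with (1 − N)·(σ²/8 + r_c) > 0. Define π_std,std(X) = (W/(X + 2W))·F_max − (σ²/8)·W·T and π_HLCP,std(X) = (N·W/(X + (1+N)·W))·F_max − N·(σ²/8)·W·T + (1 − N)·W·r_c·T. Then there exists X₀ > 0 such that for all X > X₀, π_HLCP,std(X) > π_std,std(X); i.e., unilateral deviation from the standard AMM to the HLCP is strictly profitable under sufficiently large background liquidity. -/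
/-- Unilateral deviation from the standard AMM to the HLCP is
strictly profitable under sufficiently large background liquidity X. -/
theorem hlcp_unilateral_deviation (W T N F_max σ r_c : ℝ)
    (hW : 0 < W) (hT : 0 < T) (hN0 : 0 < N) (hN1 : N < 1)
    (hF : 0 ≤ F_max) (hσ : 0 ≤ σ) (hr : 0 ≤ r_c)
    (hpos : 0 < (1 - N) * (σ ^ 2 / 8 + r_c)) :
    ∃ X₀ : ℝ, 0 < X₀ ∧ ∀ X : ℝ, X > X₀ →
      (N * W / (X + (1 + N) * W)) * F_max - N * (σ ^ 2 / 8) * W * T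
        + (1 - N) * W * r_c * T
      > (W / (X + 2 * W)) * F_max - (σ ^ 2 / 8) * W * T := by
  set G : ℝ := (1 - N) * W * T * (σ ^ 2 / 8 + r_c) with hGdef
  have hG : 0 < G := by
    have : 0 < ((1 - N) * (σ ^ 2 / 8 + r_c)) * (W * T) :=
      mul_pos hpos (mul_pos hW hT)
    nlinarith [this]
  refine ⟨W * F_max / G + 1, by positivity, ?_⟩
  intro X hX
  have hX0 : 0 < X := lt_trans (by positivity) hX
  have hden : 0 < X + 2 * W := by linarith
  have hden2 : 0 < X + (1 + N) * W := by nlinarith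
  have key : (W / (X + 2 * W)) * F_max < G := by
    rw [div_mul_eq_mul_div, div_lt_iff₀ hden]
    have h1 : W * F_max / G < X := by linarith
    have h2 : W * F_max < G * X := by
      rw [div_lt_iff₀ hG] at h1; linarith [h1]
    nlinarith [mul_pos hG hW]
  have hA : 0 ≤ (N * W / (X + (1 + N) * W)) * F_max := by positivity
  have hGexp : G = (σ ^ 2 / 8) * W * T - N * (σ ^ 2 / 8) * W * T
      + (1 - N) * W * r_c * T := by rw [hGdef]; ring
  linarith
end

section
/- Fix W > 0, T > 0, N ∈ (0, 1), F_max ≥ 0, σ ≥ 0, r_c ≥ 0 with (1 − N)·(σ²/8 + r_c) > 0. Define π_HLCP,HLCP(X) = (N·W/(X + 2N·W))·F_max − N·(σ²/8)·W·T + (1 − N)·W·r_c·T and π_std,HLCP(X) = (W/(X + (1+N)·W))·F_max − (σ²/8)·W·T. Then there exists X₀ > 0 such that for all X > X₀, π_HLCP,HLCP(X) > π_std,HLCP(X); i.e., for sufficiently large background liquidity the free-rider defection from the symmetric HLCP profile to the standard AMM is strictly unprofitable, so (HLCP, HLCP) is a strict Nash equilibrium of the limit game. -/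
/-- For sufficiently large background liquidity, free-rider
defection from the symmetric HLCP profile to the standard AMM is strictly
unprofitable, so (HLCP, HLCP) is a strict Nash equilibrium of the limit game. -/
theorem hlcp_no_free_rider (W T N F_max σ r_c : ℝ)
    (hW : 0 < W) (hT : 0 < T) (hN0 : 0 < N) (hN1 : N < 1)
    (hF : 0 ≤ F_max) (hσ : 0 ≤ σ) (hr : 0 ≤ r_c)
    (hpos : 0 < (1 - N) * (σ ^ 2 / 8 + r_c)) :
    ∃ X₀ : ℝ, 0 < X₀ ∧ ∀ X : ℝ, X > X₀ →
      (N * W / (X + 2 * N * W)) * F_max - N * (σ ^ 2 / 8) * W * T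
        + (1 - N) * W * r_c * T
      > (W / (X + (1 + N) * W)) * F_max - (σ ^ 2 / 8) * W * T := by
  set G : ℝ := (1 - N) * (σ ^ 2 / 8 + r_c) * W * T with hGdef
  have hGpos : 0 < G := by
    have := mul_pos (mul_pos hpos hW) hT
    simpa [hGdef, mul_assoc] using this
  refine ⟨1 + F_max * W / G, by positivity, ?_⟩
  intro X hX
  have hX0 : 0 < X := lt_trans (by positivity) hX
  have hd1 : 0 < X + 2 * N * W := by positivity
  have hd2 : 0 < X + (1 + N) * W := by positivity
  have h1 : F_max * W / G < X := by
    have : F_max * W / G ≤ 1 + F_max * W / G := by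
      nlinarith [div_nonneg (mul_nonneg hF hW.le) hGpos.le]
    linarith
  have h2 : F_max * W < G * X := by
    rw [div_lt_iff₀ hGpos] at h1; nlinarith [h1]
  have key : W / (X + (1 + N) * W) * F_max < G := by
    rw [div_mul_eq_mul_div, div_lt_iff₀ hd2]
    nlinarith [mul_pos hGpos (mul_pos (by linarith : (0:ℝ) < 1 + N) hW)]
  have hA : 0 ≤ N * W / (X + 2 * N * W) * F_max := by positivity
  have hGexp : G = (σ ^ 2 / 8) * W * T - N * (σ ^ 2 / 8) * W * T
      + (1 - N) * W * r_c * T := by rw [hGdef]; ring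
  linarith
end

section
/- Fix W > 0, T > 0, X > 0, F_max ≥ 0, N ∈ (0, 1), σ ≥ 0, r_c ≥ 0 with (1 − N)·(σ²/8 + r_c) > 0. If background liquidity compresses proportionally to N, the symmetric HLCP payoff (N·W/(N·X + 2N·W))·F_max − N·(σ²/8)·W·T + (1 − N)·W·r_c·T exceeds the symmetric standard-AMM payoff (W/(X + 2W))·F_max − (σ²/8)·W·T by exactly (1 − N)·W·(σ²/8 + r_c)·T > 0; hence the symmetric HLCP outcome strictly Pareto-improves on the symmetric standard-AMM outcome. -/
/-- Under proportional compression of the background liquidity,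
the symmetric HLCP payoff exceeds the symmetric standard-AMM payoff by exactly
(1 − N)·W·(σ²/8 + r_c)·T > 0, hence a strict Pareto improvement. -/
theorem hlcp_pareto_improvement (W T X F_max N σ r_c : ℝ)
    (hW : 0 < W) (hT : 0 < T) (hX : 0 < X) (hF : 0 ≤ F_max)
    (hN0 : 0 < N) (hN1 : N < 1) (hσ : 0 ≤ σ) (hr : 0 ≤ r_c)
    (hpos : 0 < (1 - N) * (σ ^ 2 / 8 + r_c)) :
    ((N * W / (N * X + 2 * N * W)) * F_max - N * (σ ^ 2 / 8) * W * T
        + (1 - N) * W * r_c * T)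
      - ((W / (X + 2 * W)) * F_max - (σ ^ 2 / 8) * W * T)
      = (1 - N) * W * (σ ^ 2 / 8 + r_c) * T ∧
    0 < (1 - N) * W * (σ ^ 2 / 8 + r_c) * T := by
  have hkey : N * W / (N * X + 2 * N * W) = W / (X + 2 * W) := by
    rw [show N * X + 2 * N * W = N * (X + 2 * W) by ring,
      mul_div_mul_left _ _ (ne_of_gt hN0)]
  constructor
  · rw [hkey]; ring
  · have := mul_pos hpos hW
    nlinarith [mul_pos this hT]
end
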